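/- arXiv:2205.11210 — 2 statements merged into one kernel-verified Lean document; each statement's English description precedes it below -/
import Mathlib

section
/- (Fact A.2) Let G_k=(V,E,k) be a strongly connected labeled simple digraph. Then A_k diag(K_k) = ∑_C λ_{k,C} A_C, where the sum runs over all directed cycles C contained in G, λ_{k,C} = ∑_{S ∈ G_C} ∏_{(j→j')∈S} k_{j→j'} with G_C the set of subgraphs of G that contain the cycle C, contain no other cycle, and in which every vertex is the source of exactly one edge, and A_C is the Laplacian matrix of the cycle C with all edge labels equal to 1. -/
open Matrix BigOperators Finset

variable {V : Type*}

/-- Directed reachability in the digraph with edge set `F`. -/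
def dReach (F : Finset (V × V)) : V → V → Prop :=
  Relation.ReflTransGen fun a b => (a, b) ∈ F

/-- Reachability in the underlying undirected graph of the digraph with edge set `F`. -/
def uReach (F : Finset (V × V)) : V → V → Prop :=
  Relation.ReflTransGen fun a b => (a, b) ∈ F ∨ (b, a) ∈ F

/-- A digraph is strongly connected if every vertex reaches every other vertex. -/
def StronglyConnected (F : Finset (V × V)) : Prop :=
  ∀ i j : V, dReach F i j

/-- A simple digraph has no self-loops. -/
def NoSelfLoops (F : Finset (V × V)) : Prop :=
  ∀ e ∈ F, e.1 ≠ e.2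

/-- The edge set `F` contains a directed cycle. -/
def HasDirectedCycle (F : Finset (V × V)) : Prop :=
  ∃ v : V, Relation.TransGen (fun a b => (a, b) ∈ F) v v

/-- The Laplacian matrix `A_k` of the labeled digraph `(V, F, k)`:
`(A_k)_{i,j} = k_{j→i}` if `(j→i) ∈ F`, `(A_k)_{i,i} = -∑_{(i→j)∈F} k_{i→j}`, and `0` otherwise. -/
noncomputable def digraphLaplacian [Fintype V] [DecidableEq V]
    (F : Finset (V × V)) (k : V × V → ℝ) : Matrix V V ℝ :=
  Matrix.of fun i j =>
    if i = j then -(∑ e ∈ F.filter (fun e => e.1 = i), k e)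
    else if (j, i) ∈ F then k (j, i) else 0

/-- `T` is a directed spanning tree of the strongly connected digraph `E`, rooted at `i`
and directed towards the root: no directed cycle, and every vertex except `i`
is the source of exactly one edge. -/
def IsSpanningTreeTo [DecidableEq V] (E : Finset (V × V)) (i : V)
    (T : Finset (V × V)) : Prop :=
  T ⊆ E ∧ ¬ HasDirectedCycle T ∧
    ∀ j : V, j ≠ i → (T.filter (fun e => e.1 = j)).card = 1

open scoped Classical in
/-- The tree constant `(K_k)_i = ∑_{T ∈ T_i} ∏_{(j→j')∈T} k_{j→j'}`. -/
noncomputable def treeConst [Fintype V] [DecidableEq V]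
    (E : Finset (V × V)) (k : V × V → ℝ) (i : V) : ℝ :=
  ∑ T ∈ E.powerset.filter (fun T => IsSpanningTreeTo E i T), ∏ e ∈ T, k e

/-- The incidence matrix of the digraph with edge set `F`: in the column of edge `(j→j')`,
entry `-1` in row `j`, entry `+1` in row `j'`, and `0` elsewhere. -/
noncomputable def incidence [DecidableEq V] (F : Finset (V × V)) :
    Matrix V {e : V × V // e ∈ F} ℝ :=
  Matrix.of fun i e =>
    (if (e : V × V).2 = i then (1 : ℝ) else 0) - (if (e : V × V).1 = i then (1 : ℝ) else 0)

/-- `C` is a directed cycle: it is nonempty, every vertex is the source of at most one edge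
and of as many edges as it is the target of, and any two edges lie on a common closed walk
(so `C` is a single cycle, not a disjoint union of cycles). -/
def IsDirectedCycle {V : Type*} [DecidableEq V] (C : Finset (V × V)) : Prop :=
  C.Nonempty ∧
    (∀ v : V, (C.filter (fun e => e.1 = v)).card ≤ 1 ∧
      (C.filter (fun e => e.1 = v)).card = (C.filter (fun e => e.2 = v)).card) ∧
    ∀ e ∈ C, ∀ e' ∈ C, Relation.ReflTransGen (fun a b => (a, b) ∈ C) e.1 e'.1

/-- `S` belongs to `G_C`: a subgraph of `E` that contains the cycle `C`, contains no other
cycle, and in which every vertex is the source of exactly one edge. -/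
def MemCycleSubgraphs {V : Type*} [DecidableEq V] (E C S : Finset (V × V)) : Prop :=
  S ⊆ E ∧ C ⊆ S ∧ (∀ v : V, (S.filter (fun e => e.1 = v)).card = 1) ∧
    ∀ C' : Finset (V × V), IsDirectedCycle C' → C' ⊆ S → C' = C

open scoped Classical in
/-- The cycle constant `λ_{k,C} = ∑_{S ∈ G_C} ∏_{(j→j')∈S} k_{j→j'}`. -/
noncomputable def cycleConst {V : Type*} [Fintype V] [DecidableEq V]
    (E C : Finset (V × V)) (k : V × V → ℝ) : ℝ :=
  ∑ S ∈ E.powerset.filter (fun S => MemCycleSubgraphs E C S), ∏ e ∈ S, k e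



set_option linter.unusedSectionVars false

namespace FactA2

open scoped Classical

variable {V : Type*} [Fintype V] [DecidableEq V]

def InOrbit (f : V → V) (v w : V) : Prop := ∃ t : ℕ, f^[t] v = w

def Per (f : V → V) (v : V) : Prop := ∃ p : ℕ, 0 < p ∧ f^[p] v = v

noncomputable def orbEdges (f : V → V) (v : V) : Finset (V × V) :=
  Finset.univ.filter (fun e => InOrbit f v e.1 ∧ e.2 = f e.1)

lemma mem_orbEdges {f : V → V} {v : V} {e : V × V} :
    e ∈ orbEdges f v ↔ InOrbit f v e.1 ∧ e.2 = f e.1 := by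
  simp [orbEdges]

lemma inOrbit_self (f : V → V) (v : V) : InOrbit f v v := ⟨0, rfl⟩

lemma inOrbit_iterate (f : V → V) (v : V) (t : ℕ) : InOrbit f v (f^[t] v) := ⟨t, rfl⟩

lemma inOrbit_trans {f : V → V} {v w u : V} (h1 : InOrbit f v w) (h2 : InOrbit f w u) :
    InOrbit f v u := by
  obtain ⟨s, rfl⟩ := h1; obtain ⟨t, rfl⟩ := h2
  exact ⟨t + s, (Function.iterate_add_apply f t s v)⟩

lemma iterate_mul_fix {f : V → V} {p : ℕ} {v : V} (h : f^[p] v = v) (q : ℕ) :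
    f^[p * q] v = v := by
  rw [Function.iterate_mul]; exact Function.iterate_fixed h q

lemma iterate_mod {f : V → V} {p : ℕ} {v : V} (h : f^[p] v = v) (s : ℕ) :
    f^[s] v = f^[s % p] v := by
  conv_lhs => rw [← Nat.mod_add_div s p]
  rw [Function.iterate_add_apply, iterate_mul_fix h]

lemma per_of_inOrbit {f : V → V} {v w : V} (hv : Per f v) (hw : InOrbit f v w) : Per f w := by
  obtain ⟨p, hp, hfix⟩ := hv
  obtain ⟨t, rfl⟩ := hw
  exact ⟨p, hp, by rw [← Function.iterate_add_apply, Nat.add_comm,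
    Function.iterate_add_apply, hfix]⟩

lemma inOrbit_symm_of_per {f : V → V} {v w : V} (hv : Per f v) (hw : InOrbit f v w) :
    InOrbit f w v := by
  obtain ⟨p, hp, hfix⟩ := hv
  obtain ⟨s, rfl⟩ := hw
  refine ⟨p * s + p - s, ?_⟩
  have hs : s ≤ p * s + p := by nlinarith
  rw [← Function.iterate_add_apply]
  have h1 : p * s + p - s + s = p * s + p := by omega
  rw [h1, show p * s + p = p * (s + 1) by ring, iterate_mul_fix hfix]

lemma orbEdges_eq_of_inOrbit {f : V → V} {v w : V} (hv : Per f v) (hw : InOrbit f v w) :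
    orbEdges f v = orbEdges f w := by
  have hvw := inOrbit_symm_of_per hv hw
  ext e
  simp only [mem_orbEdges]
  exact and_congr_left' ⟨fun h => inOrbit_trans hvw h, fun h => inOrbit_trans hw h⟩

lemma per_inj {f : V → V} {x y : V} (hx : Per f x) (hy : Per f y) (h : f x = f y) : x = y := by
  obtain ⟨p, hp, hpx⟩ := hx
  obtain ⟨q, hq, hqy⟩ := hy
  have hNx : f^[p * q] x = x := iterate_mul_fix hpx q
  have hNy : f^[p * q] y = y := by rw [Nat.mul_comm]; exact iterate_mul_fix hqy p
  have hN : 1 ≤ p * q := Nat.one_le_iff_ne_zero.mpr (by positivity)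
  have e1 : f^[p * q] x = f^[p * q - 1] (f x) := by
    conv_lhs => rw [show p * q = (p * q - 1) + 1 by omega]
    rw [Function.iterate_add_apply, Function.iterate_one]
  have e2 : f^[p * q] y = f^[p * q - 1] (f y) := by
    conv_lhs => rw [show p * q = (p * q - 1) + 1 by omega]
    rw [Function.iterate_add_apply, Function.iterate_one]
  rw [← hNx, ← hNy, e1, e2, h]

lemma exists_per (f : V → V) (v : V) : ∃ t : ℕ, Per f (f^[t] v) := by
  obtain ⟨m, n, hne, h⟩ := Finite.exists_ne_map_eq_of_infinite (fun n : ℕ => f^[n] v)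
  rcases Nat.lt_or_ge m n with h' | h'
  · refine ⟨m, n - m, by omega, ?_⟩
    rw [← Function.iterate_add_apply, show n - m + m = n by omega]
    exact h.symm
  · have h'' : n < m := by omega
    refine ⟨n, m - n, by omega, ?_⟩
    rw [← Function.iterate_add_apply, show m - n + n = m by omega]
    exact h

section FunGraph

variable {V : Type*} [Fintype V] [DecidableEq V]

lemma exists_fun_of_outdeg_one {S : Finset (V × V)}
    (h : ∀ v, (S.filter (fun e => e.1 = v)).card = 1) :
    ∃ f : V → V, ∀ e : V × V, e ∈ S ↔ e.2 = f e.1 := by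
  choose a ha using fun v => Finset.card_eq_one.mp (h v)
  have hmem : ∀ v, a v ∈ S.filter (fun e => e.1 = v) := fun v =>
    (ha v) ▸ Finset.mem_singleton_self _
  have haS : ∀ v, a v ∈ S := fun v => (Finset.mem_filter.mp (hmem v)).1
  have ha1 : ∀ v, (a v).1 = v := fun v => (Finset.mem_filter.mp (hmem v)).2
  refine ⟨fun v => (a v).2, fun e => ?_⟩
  constructor
  · intro he
    have h1 : e ∈ S.filter (fun e' => e'.1 = e.1) := Finset.mem_filter.mpr ⟨he, rfl⟩
    rw [ha e.1, Finset.mem_singleton] at h1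
    show e.2 = (a e.1).2
    exact congrArg Prod.snd h1
  · intro he
    have : e = a e.1 := Prod.ext (ha1 e.1).symm he
    rw [this]; exact haS e.1

variable {S : Finset (V × V)} {f : V → V}

/-- Reflexive transitive closure along a subgraph of a functional graph is iteration. -/
lemma rtg_iterate {C : Finset (V × V)} (hsub : ∀ e ∈ C, (e : V × V).2 = f e.1) {x y : V}
    (h : Relation.ReflTransGen (fun a b => (a, b) ∈ C) x y) : ∃ t : ℕ, f^[t] x = y := by
  induction h with
  | refl => exact ⟨0, rfl⟩
  | tail _ hstep ih =>
      obtain ⟨t, rfl⟩ := ih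
      refine ⟨t + 1, ?_⟩
      rw [Function.iterate_succ_apply']
      exact (hsub _ hstep).symm

lemma tg_iterate_chain {C : Finset (V × V)} (hsub : ∀ e ∈ C, (e : V × V).2 = f e.1) {x y : V}
    (h : Relation.TransGen (fun a b => (a, b) ∈ C) x y) :
    ∃ t : ℕ, 1 ≤ t ∧ f^[t] x = y ∧ ∀ s < t, (f^[s] x, f^[s + 1] x) ∈ C := by
  induction h with
  | single hstep =>
      rename_i c
      have hc : c = f x := hsub (x, c) hstep
      refine ⟨1, le_refl 1, by simp [hc], ?_⟩
      intro s hs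
      interval_cases s
      simpa [← hc] using hstep
  | tail _ hstep ih =>
      rename_i b c _
      obtain ⟨t, ht1, hft, hedges⟩ := ih
      have hc : c = f b := hsub (b, c) hstep
      refine ⟨t + 1, by omega, ?_, ?_⟩
      · rw [Function.iterate_succ_apply', hft, ← hc]
      · intro s hs
        rcases Nat.lt_or_ge s t with h' | h'
        · exact hedges s h'
        · have hst : s = t := by omega
          subst hst
          have : (f^[s] x, f^[s + 1] x) = (b, c) := by
            rw [hft, Function.iterate_succ_apply', hft, hc]
          rw [this]; exact hstep

lemma rtg_of_iterate (D : Finset (V × V)) {x : V}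
    (hD : ∀ s : ℕ, (f^[s] x, f^[s + 1] x) ∈ D) (r : ℕ) :
    Relation.ReflTransGen (fun a b => (a, b) ∈ D) x (f^[r] x) := by
  induction r with
  | zero => exact Relation.ReflTransGen.refl
  | succ n ih => exact Relation.ReflTransGen.tail ih (hD n)

lemma tg_of_iterate (D : Finset (V × V)) {x : V}
    (hD : ∀ s : ℕ, (f^[s] x, f^[s + 1] x) ∈ D) {p : ℕ} (hp : 0 < p) :
    Relation.TransGen (fun a b => (a, b) ∈ D) x (f^[p] x) := by
  have h1 : p - 1 + 1 = p := by omega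
  exact Relation.TransGen.tail' (rtg_of_iterate D hD (p - 1)) (h1 ▸ hD (p - 1))

lemma cycle_of_total {T : Finset (V × V)} (htot : ∀ v : V, ∃ w, (v, w) ∈ T) (v₀ : V) :
    HasDirectedCycle T := by
  choose g hg using htot
  obtain ⟨t, p, hp, hper⟩ := exists_per g v₀
  refine ⟨g^[t] v₀, ?_⟩
  have hD : ∀ s : ℕ, (g^[s] (g^[t] v₀), g^[s + 1] (g^[t] v₀)) ∈ T := by
    intro s
    rw [Function.iterate_succ_apply']
    exact hg _
  have := tg_of_iterate T hD hp
  rwa [hper] at this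

end FunGraph

section Cycles

variable {V : Type*} [Fintype V] [DecidableEq V] {f : V → V}

lemma orbEdges_filter_src (f : V → V) (v a : V) :
    (orbEdges f v).filter (fun e => e.1 = a) =
      if InOrbit f v a then {(a, f a)} else ∅ := by
  ext e
  simp only [Finset.mem_filter, mem_orbEdges]
  split_ifs with h
  · simp only [Finset.mem_singleton]
    constructor
    · rintro ⟨⟨_, he2⟩, he1⟩
      exact Prod.ext he1 (by rw [he2, he1])
    · rintro rfl
      exact ⟨⟨h, rfl⟩, rfl⟩
  · simp only [Finset.notMem_empty, iff_false]
    rintro ⟨⟨horb, _⟩, rfl⟩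
    exact h horb

lemma orbEdges_filter_tgt (hv : Per f v) (a : V) :
    (orbEdges f v).filter (fun e => e.2 = a) =
      if InOrbit f v a then {(f^[(Classical.choose hv) - 1] a, a)} else ∅ := by
  obtain ⟨hp, hfix⟩ := Classical.choose_spec hv
  set p := Classical.choose hv with hpdef
  have hper_orb : ∀ w, InOrbit f v w → f^[p] w = w := by
    intro w hw
    obtain ⟨t, rfl⟩ := hw
    rw [← Function.iterate_add_apply, Nat.add_comm, Function.iterate_add_apply, hfix]
  ext e
  simp only [Finset.mem_filter, mem_orbEdges]
  split_ifs with h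
  · simp only [Finset.mem_singleton]
    constructor
    · rintro ⟨⟨horb, he2⟩, he2a⟩
      have hb : InOrbit f v (f^[p-1] a) :=
        inOrbit_trans h (inOrbit_iterate f a (p-1))
      have hfb : f (f^[p-1] a) = a := by
        rw [← Function.iterate_succ_apply' f (p-1) a, show (p - 1).succ = p by omega,
          hper_orb a h]
      have he1 : e.1 = f^[p-1] a := by
        refine per_inj (per_of_inOrbit ⟨p, hp, hfix⟩ horb)
          (per_of_inOrbit ⟨p, hp, hfix⟩ hb) ?_
        rw [hfb, ← he2, he2a]
      exact Prod.ext he1 he2a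
    · rintro rfl
      refine ⟨⟨inOrbit_trans h (inOrbit_iterate f a (p-1)), ?_⟩, rfl⟩
      show a = f (f^[p-1] a)
      rw [← Function.iterate_succ_apply' f (p-1) a, show (p - 1).succ = p by omega,
        hper_orb a h]
  · simp only [Finset.notMem_empty, iff_false]
    rintro ⟨⟨horb, he2⟩, he2a⟩
    exact h (by rw [← he2a, he2]; exact inOrbit_trans horb ⟨1, Function.iterate_one f ▸ rfl⟩)

lemma isDirectedCycle_orbEdges (hv : Per f v) : IsDirectedCycle (orbEdges f v) := by
  refine ⟨⟨(v, f v), mem_orbEdges.mpr ⟨inOrbit_self f v, rfl⟩⟩, ?_, ?_⟩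
  · intro a
    rw [orbEdges_filter_src, orbEdges_filter_tgt hv]
    split_ifs <;> simp
  · rintro e he e' he'
    obtain ⟨⟨⟨s, hs⟩, he2⟩, _⟩ := And.intro (mem_orbEdges.mp he) trivial
    obtain ⟨⟨⟨s', hs'⟩, he2'⟩, _⟩ := And.intro (mem_orbEdges.mp he') trivial
    have hv1 : InOrbit f e.1 v := inOrbit_symm_of_per hv ⟨s, hs⟩
    obtain ⟨r, hr⟩ : InOrbit f e.1 e'.1 := inOrbit_trans hv1 ⟨s', hs'⟩
    have hD : ∀ t : ℕ, (f^[t] e.1, f^[t + 1] e.1) ∈ orbEdges f v := by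
      intro t
      refine mem_orbEdges.mpr ⟨inOrbit_trans ⟨s, hs⟩ (inOrbit_iterate f e.1 t), ?_⟩
      simp only
      rw [Function.iterate_succ_apply']
    have := rtg_of_iterate (orbEdges f v) hD r
    rwa [hr] at this

/-- Any directed cycle inside a functional graph is the orbit-edge set of any of
its source vertices, which is periodic. -/
lemma cycle_eq_orbEdges {S C' : Finset (V × V)} (hS : ∀ e : V × V, e ∈ S ↔ e.2 = f e.1)
    (hC' : IsDirectedCycle C') (hsub : C' ⊆ S) {e₀ : V × V} (he₀ : e₀ ∈ C') :
    Per f e₀.1 ∧ C' = orbEdges f e₀.1 := by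
  have hstep : ∀ e ∈ C', (e : V × V).2 = f e.1 := fun e he => (hS e).mp (hsub he)
  have hsource : ∀ a : V, (∃ e ∈ C', (e : V × V).1 = a) → (a, f a) ∈ C' := by
    rintro a ⟨e, he, rfl⟩
    have : e = (e.1, f e.1) := Prod.ext rfl (hstep e he)
    rwa [this] at he
  have hclosed : ∀ a : V, (a, f a) ∈ C' → (f a, f (f a)) ∈ C' := by
    intro a ha
    have hin : ((a, f a) : V × V) ∈ C'.filter (fun e => e.2 = f a) :=
      Finset.mem_filter.mpr ⟨ha, rfl⟩
    have hcard : 0 < (C'.filter (fun e => e.2 = f a)).card :=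
      Finset.card_pos.mpr ⟨_, hin⟩
    have heq := (hC'.2.1 (f a)).2
    have hcard' : 0 < (C'.filter (fun e => e.1 = f a)).card := by omega
    obtain ⟨e, he⟩ := Finset.card_pos.mp hcard'
    have hmem := Finset.mem_filter.mp he
    exact hsource (f a) ⟨e, hmem.1, hmem.2⟩
  set v := e₀.1 with hvdef
  have hbase : (v, f v) ∈ C' := hsource v ⟨e₀, he₀, rfl⟩
  have hiter : ∀ t : ℕ, (f^[t] v, f^[t + 1] v) ∈ C' := by
    intro t
    induction t with
    | zero => simpa using hbase
    | succ n ih =>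
        have := hclosed (f^[n] v) (by simpa [Function.iterate_succ_apply'] using ih)
        simpa [Function.iterate_succ_apply'] using this
  have hper : Per f v := by
    have h1 : ((f^[1] v, f^[1 + 1] v) : V × V) ∈ C' := hiter 1
    have hconn := hC'.2.2 _ h1 _ hbase
    obtain ⟨t, ht⟩ := rtg_iterate hstep hconn
    refine ⟨t + 1, by omega, ?_⟩
    rw [Function.iterate_add_apply]
    simpa using ht
  refine ⟨hper, ?_⟩
  apply Finset.Subset.antisymm
  · intro e he
    have hconn := hC'.2.2 _ hbase _ he
    obtain ⟨t, ht⟩ := rtg_iterate hstep hconn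
    exact mem_orbEdges.mpr ⟨⟨t, ht⟩, hstep e he⟩
  · intro e he
    obtain ⟨⟨t, ht⟩, he2⟩ := mem_orbEdges.mp he
    have : e = (f^[t] v, f^[t + 1] v) := by
      refine Prod.ext ht.symm ?_
      rw [he2, ← ht, Function.iterate_succ_apply']
    rw [this]
    exact hiter t

end Cycles

section Main

open scoped Classical

variable {V : Type*} [Fintype V] [DecidableEq V]

lemma tree_no_out_root {E T : Finset (V × V)} {a : V} (hT : IsSpanningTreeTo E a T) :
    ∀ w, (a, w) ∉ T := by
  intro w hw
  apply hT.2.1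
  apply cycle_of_total ?_ a
  intro v
  by_cases hv : v = a
  · exact ⟨w, hv ▸ hw⟩
  · have hc := hT.2.2 v hv
    obtain ⟨e, he⟩ := Finset.card_pos.mp
      (show 0 < (T.filter (fun e => e.1 = v)).card by omega)
    have hmem := Finset.mem_filter.mp he
    refine ⟨e.2, ?_⟩
    rw [show ((v, e.2) : V × V) = e from Prod.ext hmem.2.symm rfl]
    exact hmem.1

lemma forward {E T : Finset (V × V)} {a b : V} (hab : (a, b) ∈ E)
    (hT : IsSpanningTreeTo E a T) :
    ∃ C : Finset (V × V), IsDirectedCycle C ∧ (a, b) ∈ C ∧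
      MemCycleSubgraphs E C (insert (a, b) T) := by
  set S := insert (a, b) T with hSdef
  have hnotT : (a, b) ∉ T := tree_no_out_root hT b
  have hSE : S ⊆ E := Finset.insert_subset hab hT.1
  have houtS : ∀ v, (S.filter (fun e => e.1 = v)).card = 1 := by
    intro v
    by_cases hv : v = a
    · subst hv
      have heq : S.filter (fun e => e.1 = v) = {(v, b)} := by
        ext e
        simp only [Finset.mem_filter, hSdef, Finset.mem_insert, Finset.mem_singleton]
        constructor
        · rintro ⟨h1 | h1, h2⟩
          · exact h1
          · exact absurd (show (v, e.2) ∈ T by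
              rw [show ((v, e.2) : V × V) = e from Prod.ext h2.symm rfl]; exact h1)
              (tree_no_out_root hT e.2)
        · rintro rfl; exact ⟨Or.inl rfl, rfl⟩
      rw [heq, Finset.card_singleton]
    · have heq : S.filter (fun e => e.1 = v) = T.filter (fun e => e.1 = v) := by
        ext e
        simp only [Finset.mem_filter, hSdef, Finset.mem_insert]
        constructor
        · rintro ⟨rfl | h1, h2⟩
          · exact absurd h2.symm hv
          · exact ⟨h1, h2⟩
        · rintro ⟨h1, h2⟩; exact ⟨Or.inr h1, h2⟩
      rw [heq]
      exact hT.2.2 v hv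
  obtain ⟨f, hSf⟩ := exists_fun_of_outdeg_one houtS
  have hfa : f a = b := ((hSf (a, b)).mp (Finset.mem_insert_self _ _)).symm
  have hmemT : ∀ e : V × V, e ∈ S → e ≠ (a, b) → e ∈ T := by
    intro e he hne
    rcases Finset.mem_insert.mp he with h | h
    · exact absurd h hne
    · exact h
  have horbT : ∀ v : V, Per f v → ¬ InOrbit f v a → False := by
    intro v hper hnorb
    apply hT.2.1
    refine ⟨v, ?_⟩
    have hD : ∀ s : ℕ, (f^[s] v, f^[s + 1] v) ∈ T := by
      intro s
      have h1 : ((f^[s] v, f^[s + 1] v) : V × V) ∈ S :=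
        (hSf _).mpr (by simp [Function.iterate_succ_apply'])
      refine hmemT _ h1 ?_
      intro hcontra
      exact hnorb ⟨s, congrArg Prod.fst hcontra⟩
    obtain ⟨p, hp, hfix⟩ := hper
    have htg := tg_of_iterate T hD hp
    rw [hfix] at htg
    exact htg
  have hpera : Per f a := by
    obtain ⟨t, hpert⟩ := exists_per f a
    by_cases horb : InOrbit f (f^[t] a) a
    · exact per_of_inOrbit hpert horb
    · exact absurd (horbT _ hpert horb) not_false
  refine ⟨orbEdges f a, isDirectedCycle_orbEdges hpera, ?_, hSE, ?_, houtS, ?_⟩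
  · exact mem_orbEdges.mpr ⟨inOrbit_self f a, hfa.symm⟩
  · intro e he
    exact (hSf e).mpr (mem_orbEdges.mp he).2
  · intro C' hC' hsub
    obtain ⟨e₀, he₀⟩ := hC'.1
    obtain ⟨hperv, hC'eq⟩ := cycle_eq_orbEdges hSf hC' hsub he₀
    by_cases horb : InOrbit f e₀.1 a
    · rw [hC'eq]
      exact orbEdges_eq_of_inOrbit hperv horb
    · exact absurd (horbT _ hperv horb) not_false

lemma backward {E S C : Finset (V × V)} {a b : V} (habC : (a, b) ∈ C)
    (hm : MemCycleSubgraphs E C S) :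
    (a, b) ∈ S ∧ IsSpanningTreeTo E a (S.erase (a, b)) := by
  obtain ⟨hSE, hCS, houtS, huniq⟩ := hm
  have habS : (a, b) ∈ S := hCS habC
  obtain ⟨f, hSf⟩ := exists_fun_of_outdeg_one houtS
  refine ⟨habS, Finset.Subset.trans (Finset.erase_subset _ _) hSE, ?_, ?_⟩
  · rintro ⟨v, htg⟩
    have hsubT : ∀ e ∈ S.erase (a, b), (e : V × V).2 = f e.1 := fun e he =>
      (hSf e).mp (Finset.mem_of_mem_erase he)
    obtain ⟨t, ht1, hfix, hedges⟩ := tg_iterate_chain hsubT htg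
    have hperv : Per f v := ⟨t, by omega, hfix⟩
    have horbsub : orbEdges f v ⊆ S.erase (a, b) := by
      intro e he
      obtain ⟨⟨s, hs⟩, he2⟩ := mem_orbEdges.mp he
      have hmod : f^[s] v = f^[s % t] v := iterate_mod hfix s
      have hst : s % t < t := Nat.mod_lt s (by omega)
      have heq : e = (f^[s % t] v, f^[s % t + 1] v) := by
        refine Prod.ext ?_ ?_
        · rw [← hs, hmod]
        · show e.2 = f^[s % t + 1] v
          rw [he2, ← hs, hmod, Function.iterate_succ_apply']
      rw [heq]
      exact hedges _ hst
    have hCeq : orbEdges f v = C :=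
      huniq _ (isDirectedCycle_orbEdges hperv)
        (fun e he => Finset.mem_of_mem_erase (horbsub he))
    exact (Finset.notMem_erase _ _) (horbsub (hCeq ▸ habC))
  · intro v hv
    have heq : (S.erase (a, b)).filter (fun e => e.1 = v) = S.filter (fun e => e.1 = v) := by
      ext e
      simp only [Finset.mem_filter, Finset.mem_erase]
      constructor
      · rintro ⟨⟨_, h1⟩, h2⟩; exact ⟨h1, h2⟩
      · rintro ⟨h1, h2⟩
        refine ⟨⟨?_, h1⟩, h2⟩
        rintro rfl
        exact hv h2.symm
    rw [heq]
    exact houtS v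

lemma sum_out (F : Finset (V × V)) (g : V × V → ℝ) (i : V) :
    ∑ e ∈ F.filter (fun e => e.1 = i), g e
      = ∑ v : V, if (i, v) ∈ F then g (i, v) else 0 := by
  rw [← Finset.sum_filter]
  apply Finset.sum_nbij' (fun e => e.2) (fun v => (i, v))
  · intro e he
    have hmem := Finset.mem_filter.mp he
    simp only [Finset.mem_filter, Finset.mem_univ, true_and]
    rw [show ((i, e.2) : V × V) = e from Prod.ext hmem.2.symm rfl]
    exact hmem.1
  · intro v hvm
    have := (Finset.mem_filter.mp hvm).2
    exact Finset.mem_filter.mpr ⟨this, rfl⟩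
  · intro e he
    exact Prod.ext ((Finset.mem_filter.mp he).2).symm rfl
  · intro v _
    rfl
  · intro e he
    rw [show ((i, e.2) : V × V) = e from Prod.ext ((Finset.mem_filter.mp he).2).symm rfl]

lemma key (E : Finset (V × V)) (hloop : NoSelfLoops E) (k : V × V → ℝ) (a b : V) :
    (if (a, b) ∈ E then k (a, b) else 0) * treeConst E k a =
      ∑ C ∈ E.powerset.filter (fun C => IsDirectedCycle C),
        cycleConst E C k * (if (a, b) ∈ C then 1 else 0) := by
  by_cases hab : (a, b) ∈ E
  case neg =>
    rw [if_neg hab, zero_mul]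
    symm
    apply Finset.sum_eq_zero
    intro C hC
    have hCE : C ⊆ E := Finset.mem_powerset.mp (Finset.mem_filter.mp hC).1
    rw [if_neg (fun h => hab (hCE h)), mul_zero]
  case pos =>
    rw [if_pos hab]
    have hrhs : ∑ C ∈ E.powerset.filter (fun C => IsDirectedCycle C),
        cycleConst E C k * (if (a, b) ∈ C then 1 else 0)
        = ∑ C ∈ (E.powerset.filter (fun C => IsDirectedCycle C)).filter
            (fun C => (a, b) ∈ C), cycleConst E C k := by
      rw [eq_comm, Finset.sum_filter]
      apply Finset.sum_congr rfl
      intro C _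
      split_ifs <;> simp
    rw [hrhs]
    have hdisj : (↑((E.powerset.filter (fun C => IsDirectedCycle C)).filter
          (fun C => (a, b) ∈ C)) : Set (Finset (V × V))).PairwiseDisjoint
        (fun C => E.powerset.filter (fun S => MemCycleSubgraphs E C S)) := by
      intro C₁ h₁ C₂ h₂ hne
      rw [Finset.mem_coe, Finset.mem_filter, Finset.mem_filter] at h₂
      apply Finset.disjoint_left.mpr
      intro S hS₁ hS₂
      have hm₁ := (Finset.mem_filter.mp hS₁).2
      have hm₂ := (Finset.mem_filter.mp hS₂).2
      exact hne (hm₁.2.2.2 C₂ h₂.1.2 hm₂.2.1).symm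
    have hsubs : ∀ C ∈ (E.powerset.filter (fun C => IsDirectedCycle C)).filter
        (fun C => (a, b) ∈ C), cycleConst E C k
          = ∑ S ∈ E.powerset.filter (fun S => MemCycleSubgraphs E C S), ∏ e ∈ S, k e :=
      fun C _ => rfl
    rw [Finset.sum_congr rfl hsubs, ← Finset.sum_biUnion hdisj]
    rw [treeConst, Finset.mul_sum]
    apply Finset.sum_nbij' (fun T => insert (a, b) T) (fun S => S.erase (a, b))
    · intro T hTm
      have hTmem := Finset.mem_filter.mp hTm
      obtain ⟨C, hC, habC, hm⟩ := forward hab hTmem.2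
      rw [Finset.mem_biUnion]
      refine ⟨C, ?_, ?_⟩
      · refine Finset.mem_filter.mpr ⟨Finset.mem_filter.mpr
          ⟨Finset.mem_powerset.mpr (fun e he => hm.1 (hm.2.1 he)), hC⟩, habC⟩
      · exact Finset.mem_filter.mpr ⟨Finset.mem_powerset.mpr hm.1, hm⟩
    · intro S hSm
      rw [Finset.mem_biUnion] at hSm
      obtain ⟨C, hCm, hSm⟩ := hSm
      have habC : (a, b) ∈ C := (Finset.mem_filter.mp hCm).2
      have hm := (Finset.mem_filter.mp hSm).2
      obtain ⟨_, hTree⟩ := backward habC hm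
      exact Finset.mem_filter.mpr
        ⟨Finset.mem_powerset.mpr hTree.1, hTree⟩
    · intro T hTm
      exact Finset.erase_insert (tree_no_out_root (Finset.mem_filter.mp hTm).2 b)
    · intro S hSm
      rw [Finset.mem_biUnion] at hSm
      obtain ⟨C, hCm, hSm⟩ := hSm
      have habC : (a, b) ∈ C := (Finset.mem_filter.mp hCm).2
      have hm := (Finset.mem_filter.mp hSm).2
      exact Finset.insert_erase (backward habC hm).1
    · intro T hTm
      exact (Finset.prod_insert (tree_no_out_root (Finset.mem_filter.mp hTm).2 b)).symm

end Main

end FactA2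
-- marker
open scoped Classical in
/-- (Fact A.2) For a strongly connected labeled simple digraph,
`A_k diag(K_k) = ∑_C λ_{k,C} A_C`, the sum running over all directed cycles `C ⊆ E`,
where `A_C` is the Laplacian of the cycle `C` with all edge labels equal to `1`. -/
theorem laplacian_diag_treeConst_eq_sum_cycles
    {V : Type*} [Fintype V] [DecidableEq V]
    (E : Finset (V × V)) (hloop : NoSelfLoops E)
    (k : V × V → ℝ) (hk : ∀ e ∈ E, 0 < k e)
    (hsc : StronglyConnected E) :
    digraphLaplacian E k * Matrix.diagonal (treeConst E k) =
      ∑ C ∈ E.powerset.filter (fun C => IsDirectedCycle C),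
        cycleConst E C k • digraphLaplacian C (fun _ => 1) := by
  classical
  ext i l
  rw [Matrix.mul_diagonal, Matrix.sum_apply]
  have hentry : ∀ C ∈ E.powerset.filter (fun C => IsDirectedCycle C),
      (cycleConst E C k • digraphLaplacian C (fun _ => 1)) i l
        = cycleConst E C k * digraphLaplacian C (fun _ => 1) i l := by
    intro C _
    rw [Matrix.smul_apply, smul_eq_mul]
  rw [Finset.sum_congr rfl hentry]
  by_cases hil : i = l
  · subst hil
    have hL : digraphLaplacian E k i i = -(∑ e ∈ E.filter (fun e => e.1 = i), k e) := by
      simp [digraphLaplacian]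
    rw [hL, FactA2.sum_out E k i, neg_mul, Finset.sum_mul]
    have hstep2 : ∀ v ∈ (Finset.univ : Finset V),
        (if (i, v) ∈ E then k (i, v) else 0) * treeConst E k i
        = ∑ C ∈ E.powerset.filter (fun C => IsDirectedCycle C),
            cycleConst E C k * (if (i, v) ∈ C then 1 else 0) :=
      fun v _ => FactA2.key E hloop k i v
    rw [Finset.sum_congr rfl hstep2, Finset.sum_comm, neg_eq_iff_eq_neg, ← Finset.sum_neg_distrib]
    apply Finset.sum_congr rfl
    intro C _
    have hLC : digraphLaplacian C (fun _ => (1 : ℝ)) i i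
        = -(∑ e ∈ C.filter (fun e => e.1 = i), (1 : ℝ)) := by
      simp [digraphLaplacian]
    rw [hLC, FactA2.sum_out C (fun _ => (1 : ℝ)) i, ← Finset.mul_sum]
    ring
  · have hL : digraphLaplacian E k i l = if (l, i) ∈ E then k (l, i) else 0 := by
      simp [digraphLaplacian, hil]
    rw [hL, FactA2.key E hloop k l i]
    apply Finset.sum_congr rfl
    intro C _
    congr 1
    simp [digraphLaplacian, hil]
end

section
/- Let (G_k,y) be a weakly reversible mass-action system and G_ℰ=(V,ℰ) an auxiliary digraph whose connected components are directed trees on the vertex sets of the strongly connected components of G. Then x ∈ ℝ^n_{>0} is a complex-balanced equilibrium, i.e. A_k x^Y = 0, if and only if x satisfies the binomial equations x^{y(i')}/(K_k)_{i'} − x^{y(i)}/(K_k)_i = 0 for all (i→i') ∈ ℰ. -/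
open Matrix BigOperators Finset

variable {V : Type*}

/-- The LaplacianK matrix `A_k` of the labeled digraph `(V, F, k)`:
`(A_k)_{i,j} = k_{j→i}` if `(j→i) ∈ F`, `(A_k)_{i,i} = -∑_{(i→j)∈F} k_{i→j}`, and `0` otherwise. -/
noncomputable def LaplacianK [Fintype V] [DecidableEq V]
    (F : Finset (V × V)) (k : V × V → ℝ) : Matrix V V ℝ :=
  Matrix.of fun i j =>
    if i = j then -(∑ e ∈ F.filter (fun e => e.1 = i), k e)
    else if (j, i) ∈ F then k (j, i) else 0

/-- Every connected component of the digraph is strongly connected: whenever `j` is reachable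
from `i` in the underlying undirected graph, it is reachable by a directed path. -/
def WeaklyReversible {V : Type*} (F : Finset (V × V)) : Prop :=
  ∀ i j : V, uReach F i j → dReach F i j

/-- The underlying undirected simple graph of the digraph with edge set `F`. -/
def toSimpleGraph {V : Type*} (F : Finset (V × V)) : SimpleGraph V :=
  SimpleGraph.fromRel fun a b => (a, b) ∈ F

/-- `F` is an auxiliary digraph for the digraph `E`: its connected components are directed
trees on the vertex sets of the connected components of `E`. That is, `F` has no self-loops
and no pair of opposite edges, its underlying undirected graph is acyclic (a forest), and
its connected components coincide with those of `E`. -/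
def IsAuxiliary {V : Type*} (E F : Finset (V × V)) : Prop :=
  NoSelfLoops F ∧ (∀ a b : V, (a, b) ∈ F → (b, a) ∉ F) ∧
    (toSimpleGraph F).IsAcyclic ∧ (∀ i j : V, uReach F i j ↔ uReach E i j)

/-- `F` is a chain graph for `E`: an auxiliary digraph each of whose components is a chain
`i_1 → i_2 → … → i_m` on the corresponding component of `E`; equivalently, an auxiliary
digraph in which every vertex has out-degree at most one and in-degree at most one. -/
def IsChainGraphOn {V : Type*} [DecidableEq V] (E F : Finset (V × V)) : Prop :=
  IsAuxiliary E F ∧ (∀ v : V, (F.filter (fun e => e.1 = v)).card ≤ 1) ∧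
    (∀ v : V, (F.filter (fun e => e.2 = v)).card ≤ 1)

/-- `F` is a star graph for `E`: an auxiliary digraph each of whose components is a star
`i_1 → i_m, …, i_{m-1} → i_m` on the corresponding component of `E`; equivalently, an
auxiliary digraph in which all edges of one component share the same target (the root). -/
def IsStarGraphOn {V : Type*} (E F : Finset (V × V)) : Prop :=
  IsAuxiliary E F ∧ ∀ e ∈ F, ∀ e' ∈ F, uReach F e.2 e'.2 → e.2 = e'.2

/-- `T` is a directed spanning tree, rooted at `i` and directed towards the root, of the
connected component of `i` in the digraph `E`: no directed cycle, every vertex of the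
component except `i` is the source of exactly one edge, and vertices outside the component
are sources of no edge. -/
def IsCompSpanningTreeTo {V : Type*} [DecidableEq V] (E : Finset (V × V)) (i : V)
    (T : Finset (V × V)) : Prop :=
  T ⊆ E ∧ ¬ HasDirectedCycle T ∧
    (∀ j : V, j ≠ i → uReach E j i → (T.filter (fun e => e.1 = j)).card = 1) ∧
    (∀ j : V, ¬ uReach E j i → (T.filter (fun e => e.1 = j)).card = 0)

open scoped Classical in
/-- The tree constants, given componentwise: on each component `V^λ`,
`(K_k)_i = ∑_{T ∈ T_i} ∏_{(j→j')∈T} k_{j→j'}` with `T_i` the set of directed spanning trees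
of the component rooted at `i`, directed towards the root. -/
noncomputable def treeConstM {V : Type*} [Fintype V] [DecidableEq V]
    (E : Finset (V × V)) (k : V × V → ℝ) (i : V) : ℝ :=
  ∑ T ∈ E.powerset.filter (fun T => IsCompSpanningTreeTo E i T), ∏ e ∈ T, k e

/-- The (generalized) monomial `x^{y(i)} = ∏_j x_j^{(y(i))_j}` (real exponentiation). -/
noncomputable def monomial {V : Type*} [Fintype V] {n : ℕ}
    (y : V → Fin n → ℝ) (x : Fin n → ℝ) (i : V) : ℝ :=
  ∏ j : Fin n, x j ^ y i j

/-- The matrix `Y ∈ ℝ^{n × V}` whose columns are the complexes `y(i)`. -/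
noncomputable def complexMatrix {V : Type*} {n : ℕ} (y : V → Fin n → ℝ) :
    Matrix (Fin n) V ℝ :=
  Matrix.of fun j i => y i j

/-- The mass-action vector field `f_k(x) = Y A_k x^Y`. -/
noncomputable def massActionField {V : Type*} [Fintype V] [DecidableEq V] {n : ℕ}
    (E : Finset (V × V)) (k : V × V → ℝ) (y : V → Fin n → ℝ) (x : Fin n → ℝ) :
    Fin n → ℝ :=
  (complexMatrix y).mulVec ((LaplacianK E k).mulVec (monomial y x))

section Aux
variable {V : Type*}

lemma uReach_symm {F : Finset (V × V)} {a b : V} (h : uReach F a b) : uReach F b a := by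
  induction h with
  | refl => exact .refl
  | tail _ h2 ih => exact Relation.ReflTransGen.trans (.single h2.symm) ih

lemma uReach_of_mem {F : Finset (V × V)} {a b : V} (h : (a,b) ∈ F) : uReach F a b :=
  .single (Or.inl h)

lemma dReach_uReach {F : Finset (V × V)} {a b : V} (h : dReach F a b) : uReach F a b :=
  Relation.ReflTransGen.mono (fun _ _ => Or.inl) _ _ h

lemma out_eq {S : Finset (V×V)} {v w w' : V} [DecidableEq V]
    (h : (S.filter (fun e => e.1 = v)).card ≤ 1) (h1 : (v,w) ∈ S) (h2 : (v,w') ∈ S) : w = w' := by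
  have := Finset.card_le_one.mp h (v,w) (by simp [h1]) (v,w') (by simp [h2])
  simpa using (Prod.mk.injEq _ _ _ _ ▸ this).2

lemma reach_total {S : Finset (V×V)} [DecidableEq V]
    (hS : ∀ v, (S.filter (fun e => e.1 = v)).card ≤ 1) {a b c : V}
    (hab : Relation.ReflTransGen (fun x y => (x,y) ∈ S) a b)
    (hac : Relation.ReflTransGen (fun x y => (x,y) ∈ S) a c) :
    Relation.ReflTransGen (fun x y => (x,y) ∈ S) b c ∨
      Relation.ReflTransGen (fun x y => (x,y) ∈ S) c b := by
  revert hac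
  induction hab using Relation.ReflTransGen.head_induction_on with
  | refl => exact fun hac => Or.inl hac
  | head hstep hrest ih =>
    intro hac
    rcases Relation.ReflTransGen.cases_head hac with h | ⟨x', hx', hrest'⟩
    · subst h; exact Or.inr (hrest.head hstep)
    · have := out_eq (hS _) hstep hx'
      subst this
      exact ih hrest'

lemma reach_insert_split {S : Finset (V×V)} [DecidableEq V] {a : V×V} {u w : V}
    (h : Relation.ReflTransGen (fun x y => (x,y) ∈ insert a S) u w) :
    Relation.ReflTransGen (fun x y => (x,y) ∈ S) u w ∨
      (Relation.ReflTransGen (fun x y => (x,y) ∈ S) u a.1 ∧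
        Relation.ReflTransGen (fun x y => (x,y) ∈ S) a.2 w) := by
  induction h using Relation.ReflTransGen.head_induction_on with
  | refl => exact Or.inl .refl
  | head hstep hrest ih =>
    rcases Finset.mem_insert.mp hstep with heq | hmem
    · subst heq
      rcases ih with h | ⟨_, h2⟩
      · exact Or.inr ⟨.refl, h⟩
      · exact Or.inr ⟨.refl, h2⟩
    · rcases ih with h | ⟨h1, h2⟩
      · exact Or.inl (h.head hmem)
      · exact Or.inr ⟨h1.head hmem, h2⟩

lemma cycle_insert {S : Finset (V×V)} [DecidableEq V] {a : V×V}
    (h : HasDirectedCycle (insert a S)) :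
    HasDirectedCycle S ∨ Relation.ReflTransGen (fun x y => (x,y) ∈ S) a.2 a.1 := by
  obtain ⟨v, hv⟩ := h
  obtain ⟨x, hstep, hrest⟩ := Relation.TransGen.head'_iff.mp hv
  rcases Finset.mem_insert.mp hstep with heq | hmem
  · subst heq
    rcases reach_insert_split hrest with h | ⟨h1, _⟩
    · exact Or.inr h
    · exact Or.inr h1
  · rcases reach_insert_split hrest with h | ⟨h1, h2⟩
    · exact Or.inl ⟨v, Relation.TransGen.head' hmem h⟩
    · exact Or.inr ((h2.tail hmem).trans h1)

lemma cycle_mono {S S' : Finset (V×V)} (hsub : S ⊆ S') (h : HasDirectedCycle S) :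
    HasDirectedCycle S' := by
  obtain ⟨v, hv⟩ := h
  exact ⟨v, Relation.TransGen.mono (fun _ _ h => hsub h) _ _ hv⟩

lemma reach_mono {S S' : Finset (V×V)} (hsub : S ⊆ S') {a b : V}
    (h : Relation.ReflTransGen (fun x y => (x,y) ∈ S) a b) :
    Relation.ReflTransGen (fun x y => (x,y) ∈ S') a b :=
  Relation.ReflTransGen.mono (fun _ _ h => hsub h) _ _ h

lemma cycle_of_progress [Finite V] {S : Finset (V×V)} {P : V → Prop} {v0 : V} (h0 : P v0)
    (hstep : ∀ v, P v → ∃ w, (v,w) ∈ S ∧ P w) : HasDirectedCycle S := by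
  have : ∀ v : {v // P v}, ∃ w : {v // P v}, (v.1, w.1) ∈ S := by
    rintro ⟨v, hv⟩
    obtain ⟨w, hw1, hw2⟩ := hstep v hv
    exact ⟨⟨w, hw2⟩, hw1⟩
  choose g hg using this
  set x : ℕ → {v // P v} := fun n => g^[n] ⟨v0, h0⟩ with hx
  have hedge : ∀ n, ((x n).1, (x (n+1)).1) ∈ S := by
    intro n
    have : x (n+1) = g (x n) := by
      simp only [hx, Function.iterate_succ_apply']
    rw [this]; exact hg (x n)
  have hchain : ∀ p q, p < q → Relation.TransGen (fun a b => (a,b) ∈ S) (x p).1 (x q).1 := by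
    intro p q
    induction q with
    | zero => exact fun h => absurd h (by omega)
    | succ q ih =>
      intro hpq
      rcases Nat.lt_succ_iff_lt_or_eq.mp hpq with h | h
      · exact (ih h).tail (hedge q)
      · rw [h]; exact .single (hedge q)
  have : ∃ m n : ℕ, m ≠ n ∧ x m = x n := by
    have := Finite.exists_ne_map_eq_of_infinite x
    obtain ⟨m, n, h1, h2⟩ := this
    exact ⟨m, n, h1, h2⟩
  obtain ⟨m, n, hne, heq⟩ := this
  rcases hne.lt_or_gt with h | h
  · exact ⟨(x m).1, heq ▸ hchain m n h⟩
  · exact ⟨(x n).1, heq ▸ hchain n m h⟩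

end Aux


-- BATCH2
section Trees
set_option linter.unusedSectionVars false
variable {V : Type*} [Fintype V] [DecidableEq V] {E : Finset (V × V)} {i : V} {T : Finset (V × V)}

lemma tree_edge_src_comp (hT : IsCompSpanningTreeTo E i T) {a b : V}
    (hab : (a,b) ∈ T) : uReach E a i := by
  by_contra h
  have := hT.2.2.2 a h
  rw [Finset.card_eq_zero] at this
  have : (a,b) ∈ T.filter (fun e => e.1 = a) := by simp [hab]
  simp [‹T.filter (fun e => e.1 = a) = ∅›] at this

lemma tree_edge_tgt_comp (hT : IsCompSpanningTreeTo E i T) {a b : V}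
    (hab : (a,b) ∈ T) : uReach E b i :=
  Relation.ReflTransGen.trans (.single (Or.inr (hT.1 hab))) (tree_edge_src_comp hT hab)

lemma tree_root_out (hT : IsCompSpanningTreeTo E i T) :
    (T.filter (fun e => e.1 = i)).card = 0 := by
  by_contra h
  rw [Finset.card_eq_zero, ← Finset.not_nonempty_iff_eq_empty, not_not] at h
  obtain ⟨e, he⟩ := h
  rw [Finset.mem_filter] at he
  have hprog : ∀ v : V, uReach E v i → ∃ w, (v,w) ∈ T ∧ uReach E w i := by
    intro v hv
    by_cases hvi : v = i
    · subst hvi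
      refine ⟨e.2, ?_, ?_⟩
      · have : e = (v, e.2) := by rw [← he.2]
        rw [← this]; exact he.1
      · have : e = (v, e.2) := by rw [← he.2]
        exact tree_edge_tgt_comp hT (this ▸ he.1)
    · have h1 := hT.2.2.1 v hvi hv
      rw [Finset.card_eq_one] at h1
      obtain ⟨e', he'⟩ := h1
      have he'm : e' ∈ T.filter (fun e => e.1 = v) := by simp [he']
      rw [Finset.mem_filter] at he'm
      refine ⟨e'.2, ?_, ?_⟩
      · have : e' = (v, e'.2) := by rw [← he'm.2]
        rw [← this]; exact he'm.1
      · have : e' = (v, e'.2) := by rw [← he'm.2]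
        exact tree_edge_tgt_comp hT (this ▸ he'm.1)
  exact hT.2.1 (cycle_of_progress (P := fun v => uReach E v i) (Relation.ReflTransGen.refl) hprog)

lemma tree_outdeg_le_one (hT : IsCompSpanningTreeTo E i T) (v : V) :
    (T.filter (fun e => e.1 = v)).card ≤ 1 := by
  by_cases hvi : v = i
  · subst hvi; rw [tree_root_out hT]; omega
  · by_cases hv : uReach E v i
    · rw [hT.2.2.1 v hvi hv]
    · rw [hT.2.2.2 v hv]; omega

lemma tree_reach_root (hT : IsCompSpanningTreeTo E i T) :
    ∀ v, uReach E v i → Relation.ReflTransGen (fun x y => (x,y) ∈ T) v i := by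
  by_contra h
  push_neg at h
  obtain ⟨v0, hv0, hnr⟩ := h
  have hprog : ∀ v : V, (uReach E v i ∧ ¬ Relation.ReflTransGen (fun x y => (x,y) ∈ T) v i) →
      ∃ w, (v,w) ∈ T ∧ (uReach E w i ∧ ¬ Relation.ReflTransGen (fun x y => (x,y) ∈ T) w i) := by
    rintro v ⟨hv, hnv⟩
    have hvi : v ≠ i := by rintro rfl; exact hnv .refl
    have h1 := hT.2.2.1 v hvi hv
    rw [Finset.card_eq_one] at h1
    obtain ⟨e', he'⟩ := h1
    have he'm : e' ∈ T.filter (fun e => e.1 = v) := by simp [he']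
    rw [Finset.mem_filter] at he'm
    have hev : e' = (v, e'.2) := by rw [← he'm.2]
    refine ⟨e'.2, hev ▸ he'm.1, tree_edge_tgt_comp hT (hev ▸ he'm.1), fun hr => hnv (hr.head (hev ▸ he'm.1))⟩
  exact hT.2.1 (cycle_of_progress (P := fun v => uReach E v i ∧ ¬ Relation.ReflTransGen (fun x y => (x,y) ∈ T) v i) ⟨hv0, hnr⟩ hprog)

lemma exists_tree (hwr : WeaklyReversible E) (i : V) : ∃ T, IsCompSpanningTreeTo E i T := by
  classical
  let R : ℕ → V → Prop := fun n => n.rec (fun v => v = i) (fun _ Rn v => ∃ w, (v,w) ∈ E ∧ Rn w)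
  have hRsucc : ∀ (m : ℕ) (v : V), R (m+1) v ↔ ∃ w, (v,w) ∈ E ∧ R m w := fun _ _ => Iff.rfl
  have hR : ∀ v, dReach E v i → ∃ n, R n v := by
    intro v hv
    induction hv using Relation.ReflTransGen.head_induction_on with
    | refl => exact ⟨0, rfl⟩
    | head hstep _ ih =>
      obtain ⟨n, hn⟩ := ih
      exact ⟨n + 1, _, hstep, hn⟩
  have hcomp : ∀ v, uReach E v i → ∃ n, R n v := fun v h => hR v (hwr v i h)
  let d : V → ℕ := fun v => @dite ℕ (∃ n, R n v) (Classical.propDecidable _) (fun h => @Nat.find _ (Classical.decPred _) h) (fun _ => 0)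
  have key : ∀ v, uReach E v i → v ≠ i → ∃ w, ((v,w) ∈ E ∧ uReach E w i) ∧ d w < d v := by
    intro v hv hvi
    have hex : ∃ n, R n v := hcomp v hv
    have hdv : d v = @Nat.find (fun n => R n v) (Classical.decPred _) hex := by simp only [d]; rw [dif_pos hex]
    have h0 : R (d v) v := by rw [hdv]; exact @Nat.find_spec (fun n => R n v) (Classical.decPred _) hex
    have hne : d v ≠ 0 := by
      intro hzero
      rw [hzero] at h0
      exact hvi h0
    obtain ⟨m, hm⟩ := Nat.exists_eq_succ_of_ne_zero hne
    rw [hm] at h0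
    obtain ⟨w, hw, hRw⟩ := (hRsucc m v).mp h0
    have hwex : ∃ n, R n w := ⟨m, hRw⟩
    have hdw : d w = @Nat.find (fun n => R n w) (Classical.decPred _) hwex := by simp only [d]; rw [dif_pos hwex]
    have : d w ≤ m := by rw [hdw]; exact @Nat.find_min' (fun n => R n w) (Classical.decPred _) hwex _ hRw
    refine ⟨w, ⟨hw, ?_⟩, by omega⟩
    exact Relation.ReflTransGen.trans (.single (Or.inr hw)) hv
  let s : V → V := fun v => if h : uReach E v i ∧ v ≠ i then (key v h.1 h.2).choose else v
  have hs : ∀ v (h : uReach E v i ∧ v ≠ i),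
      ((v, s v) ∈ E ∧ uReach E (s v) i) ∧ d (s v) < d v := by
    intro v h
    have : s v = (key v h.1 h.2).choose := dif_pos h
    rw [this]
    exact (key v h.1 h.2).choose_spec
  refine ⟨(Finset.univ.filter (fun v => uReach E v i ∧ v ≠ i)).image (fun v => (v, s v)), ?_, ?_, ?_, ?_⟩
  · intro e he
    rw [Finset.mem_image] at he
    obtain ⟨v, hv, rfl⟩ := he
    rw [Finset.mem_filter] at hv
    exact (hs v hv.2).1.1
  · rintro ⟨v, hcyc⟩
    have hdec : ∀ a b : V, Relation.TransGen (fun x y =>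
        (x,y) ∈ (Finset.univ.filter (fun v => uReach E v i ∧ v ≠ i)).image (fun v => (v, s v))) a b →
        d b < d a := by
      intro a b hab
      induction hab with
      | single h =>
        rw [Finset.mem_image] at h
        obtain ⟨v', hv', heq⟩ := h
        rw [Finset.mem_filter] at hv'
        obtain ⟨h1, h2⟩ := Prod.mk.inj heq
        subst h1
        rw [← h2]
        exact (hs v' hv'.2).2
      | tail hab hstep ih =>
        rw [Finset.mem_image] at hstep
        obtain ⟨v', hv', heq⟩ := hstep
        rw [Finset.mem_filter] at hv'
        obtain ⟨h1, h2⟩ := Prod.mk.inj heq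
        subst h1
        rw [← h2]
        exact lt_trans (hs v' hv'.2).2 ih
    exact absurd (hdec v v hcyc) (by omega)
  · intro j hji hj
    rw [Finset.card_eq_one]
    refine ⟨(j, s j), ?_⟩
    ext e
    simp only [Finset.mem_filter, Finset.mem_image, Finset.mem_univ, true_and,
      Finset.mem_singleton]
    constructor
    · rintro ⟨⟨v', hv', rfl⟩, h2⟩
      simp only at h2
      subst h2
      rfl
    · rintro rfl
      exact ⟨⟨j, ⟨hj, hji⟩, rfl⟩, rfl⟩
  · intro j hj
    rw [Finset.card_eq_zero]
    ext e
    simp only [Finset.mem_filter, Finset.mem_image, Finset.mem_univ, true_and,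
      Finset.notMem_empty, iff_false, not_and]
    rintro ⟨v', hv', rfl⟩ h2
    simp only at h2
    subst h2
    exact hj hv'.1

lemma treeConstM_pos {k : V × V → ℝ} (hk : ∀ e ∈ E, 0 < k e) (hwr : WeaklyReversible E) (i : V) :
    0 < treeConstM E k i := by
  classical
  obtain ⟨T, hT⟩ := exists_tree hwr i
  rw [treeConstM]
  apply Finset.sum_pos
  · intro T' hT'
    simp only [Finset.mem_filter, Finset.mem_powerset] at hT'
    exact Finset.prod_pos fun e he => hk e (hT'.1 he)
  · refine ⟨T, ?_⟩
    simp only [Finset.mem_filter, Finset.mem_powerset]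
    exact ⟨hT.1, hT⟩

end Trees

section MT
set_option linter.unusedSectionVars false
variable {V : Type*} [Fintype V] [DecidableEq V] {E : Finset (V × V)} {i : V} {T : Finset (V × V)}

lemma eq_singleton_of_mem_card_one {α : Type*} {s : Finset α} {a : α}
    (h1 : s.card = 1) (ha : a ∈ s) : s = {a} := by
  obtain ⟨b, hb⟩ := Finset.card_eq_one.mp h1
  subst hb
  rw [Finset.mem_singleton] at ha
  rw [ha]

lemma root_no_out (hT : IsCompSpanningTreeTo E i T) {x : V} : (i, x) ∉ T := by
  intro h
  have h0 := Finset.card_eq_zero.mp (tree_root_out hT)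
  have : (i,x) ∈ T.filter (fun e => e.1 = i) := by simp [h]
  simp [h0] at this

lemma root_filter_empty (hT : IsCompSpanningTreeTo E i T) : T.filter (fun e => e.1 = i) = ∅ :=
  Finset.card_eq_zero.mp (tree_root_out hT)

lemma no_reach_from_root (hT : IsCompSpanningTreeTo E i T) {b : V}
    (h : Relation.ReflTransGen (fun x y => (x,y) ∈ T) i b) : i = b := by
  rcases Relation.ReflTransGen.cases_head h with h | ⟨x, hx, _⟩
  · exact h
  · exact absurd hx (root_no_out hT)

lemma enter_unique (hloop : NoSelfLoops E) (hT : IsCompSpanningTreeTo E i T) {l : V}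
    {e₁ e₂ : V×V} (h1 : e₁ ∈ T) (h1i : e₁.2 = i)
    (hr1 : Relation.ReflTransGen (fun x y => (x,y) ∈ T) l e₁.1)
    (h2 : e₂ ∈ T) (h2i : e₂.2 = i)
    (hr2 : Relation.ReflTransGen (fun x y => (x,y) ∈ T) l e₂.1) : e₁ = e₂ := by
  have key : ∀ a b : V×V, a ∈ T → a.2 = i → b ∈ T → b.2 = i →
      Relation.ReflTransGen (fun x y => (x,y) ∈ T) a.1 b.1 → a = b := by
    intro a b ha hai hb hbi hr
    rcases Relation.ReflTransGen.cases_head hr with h | ⟨x, hx, hrest⟩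
    · exact Prod.ext h (hai.trans hbi.symm)
    · have hax : (a.1, a.2) ∈ T := by simpa using ha
      have hxa : x = a.2 := out_eq (tree_outdeg_le_one hT a.1) hx hax
      subst hxa
      rw [hai] at hrest
      have hib := no_reach_from_root hT hrest
      exact absurd (hbi.trans hib) (Ne.symm (hloop b (hT.1 hb)))
  rcases reach_total (tree_outdeg_le_one hT) hr1 hr2 with h | h
  · exact key e₁ e₂ h1 h1i h2 h2i h
  · exact (key e₂ e₁ h2 h2i h1 h1i h).symm

lemma exists_enter (hT : IsCompSpanningTreeTo E i T) {l : V} (hl : uReach E l i) (hli : l ≠ i) :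
    ∃ x ∈ T, x.2 = i ∧ Relation.ReflTransGen (fun a b => (a,b) ∈ T) l x.1 := by
  have hr := tree_reach_root hT l hl
  rcases Relation.ReflTransGen.cases_tail hr with h | ⟨w, hw, hwi⟩
  · exact absurd h.symm hli
  · exact ⟨(w, i), hwi, rfl, hw⟩

lemma tree_rotate_to_root (hloop : NoSelfLoops E) {e f : V×V} (he : e ∈ E) (hei : e.2 = i)
    (hT : IsCompSpanningTreeTo E e.1 T) (hf : f ∈ T) (hfi : f.1 = i) :
    IsCompSpanningTreeTo E i (insert e (T.erase f)) := by
  have hji : e.1 ≠ i := fun h => hloop e he (h.trans hei.symm)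
  have hjiu : uReach E e.1 i := hei ▸ uReach_of_mem (show (e.1, e.2) ∈ E by simpa using he)
  have hiju : uReach E i e.1 := uReach_symm hjiu
  have herase : (T.erase f).filter (fun x => x.1 = i) = ∅ := by
    rw [Finset.filter_erase]
    rw [eq_singleton_of_mem_card_one (hT.2.2.1 i (Ne.symm hji) hiju)
      (Finset.mem_filter.mpr ⟨hf, hfi⟩)]
    simp
  refine ⟨?_, ?_, ?_, ?_⟩
  · intro x hx
    rcases Finset.mem_insert.mp hx with rfl | hx
    · exact he
    · exact hT.1 (Finset.erase_subset _ _ hx)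
  · intro hcyc
    rcases cycle_insert hcyc with hc | hr
    · exact hT.2.1 (cycle_mono (Finset.erase_subset _ _) hc)
    · rw [hei] at hr
      rcases Relation.ReflTransGen.cases_head hr with h | ⟨x, hx, _⟩
      · exact hji h.symm
      · have : (i,x) ∈ (T.erase f).filter (fun y => y.1 = i) := by simp [hx]
        simp [herase] at this
  · intro j' hj'i hj'u
    rw [Finset.filter_insert]
    by_cases hj'j : j' = e.1
    · subst hj'j
      rw [if_pos rfl]
      rw [Finset.filter_erase, root_filter_empty hT]
      simp
    · rw [if_neg (fun h => hj'j h.symm)]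
      rw [Finset.filter_erase, Finset.erase_eq_of_notMem
        (fun h => hj'i (((Finset.mem_filter.mp h).2).symm.trans hfi))]
      exact hT.2.2.1 j' hj'j (Relation.ReflTransGen.trans hj'u hiju)
  · intro j' hj'
    have hj'i : j' ≠ i := fun h => hj' (h ▸ Relation.ReflTransGen.refl)
    have hj'j : j' ≠ e.1 := fun h => hj' (h ▸ hjiu)
    rw [Finset.filter_insert, if_neg (fun h => hj'j h.symm)]
    rw [Finset.filter_erase, Finset.erase_eq_of_notMem
      (fun h => hj'i (((Finset.mem_filter.mp h).2).symm.trans hfi))]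
    exact hT.2.2.2 j' (fun h => hj' (Relation.ReflTransGen.trans h hjiu))

lemma tree_rotate_from_root (hloop : NoSelfLoops E) {f e : V×V} (hf : f ∈ E) (hfi : f.1 = i)
    (hT : IsCompSpanningTreeTo E i T) (he : e ∈ T) (hei : e.2 = i)
    (hreach : Relation.ReflTransGen (fun a b => (a,b) ∈ T) f.2 e.1) :
    IsCompSpanningTreeTo E e.1 (insert f (T.erase e)) := by
  have hji : e.1 ≠ i := fun h => hloop e (hT.1 he) (h.trans hei.symm)
  have hjiu : uReach E e.1 i := hei ▸ uReach_of_mem (show (e.1, e.2) ∈ E by simpa using hT.1 he)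
  have hiju : uReach E i e.1 := uReach_symm hjiu
  have hli : f.2 ≠ i := fun h => hloop f hf (hfi.trans h.symm)
  refine ⟨?_, ?_, ?_, ?_⟩
  · intro x hx
    rcases Finset.mem_insert.mp hx with rfl | hx
    · exact hf
    · exact hT.1 (Finset.erase_subset _ _ hx)
  · intro hcyc
    rcases cycle_insert hcyc with hc | hr
    · exact hT.2.1 (cycle_mono (Finset.erase_subset _ _) hc)
    · rw [hfi] at hr
      rcases Relation.ReflTransGen.cases_tail hr with h | ⟨w, hw, hwi⟩
      · exact hli h.symm
      · have hwT : (w, i) ∈ T := Finset.mem_of_mem_erase hwi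
        have hwe : (w, i) ≠ e := (Finset.mem_erase.mp hwi).1
        exact hwe (enter_unique hloop hT hwT rfl
          (reach_mono (Finset.erase_subset _ _) hw) he hei hreach)
  · intro j' hj'j hj'u
    rw [Finset.filter_insert]
    by_cases hj'i : j' = i
    · subst hj'i
      rw [if_pos hfi]
      rw [Finset.filter_erase, root_filter_empty hT]
      simp
    · rw [if_neg (fun h => hj'i (h.symm.trans hfi))]
      rw [Finset.filter_erase, Finset.erase_eq_of_notMem
        (fun h => hj'j ((Finset.mem_filter.mp h).2).symm)]
      exact hT.2.2.1 j' hj'i (Relation.ReflTransGen.trans hj'u hjiu)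
  · intro j' hj'
    have hj'i : j' ≠ i := fun h => hj' (h ▸ hiju)
    have hj'j : j' ≠ e.1 := fun h => hj' (h ▸ Relation.ReflTransGen.refl)
    rw [Finset.filter_insert, if_neg (fun h => hj'i (h.symm.trans hfi))]
    rw [Finset.filter_erase, Finset.erase_eq_of_notMem
      (fun h => hj'j ((Finset.mem_filter.mp h).2).symm)]
    exact hT.2.2.2 j' (fun h => hj' (Relation.ReflTransGen.trans h hiju))

end MT

section MT2
set_option linter.unusedSectionVars false
variable {V : Type*} [Fintype V] [DecidableEq V] {E : Finset (V × V)}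

open scoped Classical in
lemma sum_trees_eq (hloop : NoSelfLoops E) (k : V × V → ℝ) (i : V) :
    ∑ p ∈ (E ×ˢ E.powerset).filter
        (fun p => p.1.2 = i ∧ IsCompSpanningTreeTo E p.1.1 p.2), k p.1 * ∏ x ∈ p.2, k x
    = ∑ p ∈ (E ×ˢ E.powerset).filter
        (fun p => p.1.1 = i ∧ IsCompSpanningTreeTo E i p.2), k p.1 * ∏ x ∈ p.2, k x := by
  classical
  set Φ : (V×V) × Finset (V×V) → (V×V) × Finset (V×V) := fun p =>
    if h : ∃ x ∈ p.2, x.1 = i then (h.choose, insert p.1 (p.2.erase h.choose)) else p with hPhi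
  set Ψ : (V×V) × Finset (V×V) → (V×V) × Finset (V×V) := fun q =>
    if h : ∃ x ∈ q.2, x.2 = i ∧ Relation.ReflTransGen (fun a b => (a,b) ∈ q.2) q.1.2 x.1
    then (h.choose, insert q.1 (q.2.erase h.choose)) else q with hPsi
  have master1 : ∀ e : V × V, ∀ T : Finset (V × V), e ∈ E → e.2 = i →
      IsCompSpanningTreeTo E e.1 T →
      Φ (e, T) ∈ (E ×ˢ E.powerset).filter
        (fun p => p.1.1 = i ∧ IsCompSpanningTreeTo E i p.2) ∧
      Ψ (Φ (e, T)) = (e, T) ∧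
      k e * ∏ x ∈ T, k x = k (Φ (e,T)).1 * ∏ x ∈ (Φ (e,T)).2, k x := by
    intro e T heE hei hT
    have hji : e.1 ≠ i := fun h => hloop e heE (h.trans hei.symm)
    have hjiu : uReach E e.1 i := hei ▸ uReach_of_mem (show (e.1, e.2) ∈ E by simpa using heE)
    have hiju : uReach E i e.1 := uReach_symm hjiu
    have hcard : (T.filter (fun x => x.1 = i)).card = 1 := hT.2.2.1 i (Ne.symm hji) hiju
    have hex : ∃ x ∈ T, x.1 = i := by
      obtain ⟨f₀, hs⟩ := Finset.card_eq_one.mp hcard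
      have hmem : f₀ ∈ T.filter (fun x => x.1 = i) := hs ▸ Finset.mem_singleton_self f₀
      rw [Finset.mem_filter] at hmem
      exact ⟨f₀, hmem.1, hmem.2⟩
    have hPhip : Φ (e, T) = (hex.choose, insert e (T.erase hex.choose)) := by
      simp only [hPhi]; rw [dif_pos hex]
    obtain ⟨hfT, hfi⟩ := hex.choose_spec
    set f := hex.choose with hfdef
    have hfE : f ∈ E := hT.1 hfT
    have hT' : IsCompSpanningTreeTo E i (insert e (T.erase f)) :=
      tree_rotate_to_root hloop heE hei hT hfT hfi
    have heT : e ∉ T := fun h => root_no_out hT (show (e.1, e.2) ∈ T by simpa using h)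
    have heTf : e ∉ T.erase f := fun h => heT (Finset.mem_of_mem_erase h)
    refine ⟨?_, ?_, ?_⟩
    · rw [hPhip, Finset.mem_filter, Finset.mem_product]
      exact ⟨⟨hfE, Finset.mem_powerset.mpr hT'.1⟩, hfi, hT'⟩
    · -- Ψ (Φ (e,T)) = (e,T)
      have hli : f.2 ≠ i := fun h => hloop f hfE (hfi.trans h.symm)
      have hlu : uReach E f.2 i :=
        uReach_symm (hfi ▸ uReach_of_mem (show (f.1, f.2) ∈ E by simpa using hfE))
      have hex₂ : ∃ x ∈ insert e (T.erase f), x.2 = i ∧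
          Relation.ReflTransGen (fun a b => (a,b) ∈ insert e (T.erase f)) f.2 x.1 :=
        exists_enter hT' hlu hli
      have hPsiq : Ψ (f, insert e (T.erase f)) =
          (hex₂.choose, insert f ((insert e (T.erase f)).erase hex₂.choose)) := by
        simp only [hPsi]; rw [dif_pos hex₂]
      obtain ⟨he'T', he'i, he'r⟩ := hex₂.choose_spec
      have hre : Relation.ReflTransGen (fun a b => (a,b) ∈ insert e (T.erase f)) f.2 e.1 := by
        have h1 : uReach E f.2 e.1 := Relation.ReflTransGen.trans hlu hiju
        have h2 : Relation.ReflTransGen (fun a b => (a,b) ∈ T) f.2 e.1 :=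
          tree_reach_root hT f.2 h1
        rw [← Finset.insert_erase hfT] at h2
        rcases reach_insert_split h2 with h3 | ⟨_, h3⟩ <;>
          exact reach_mono (Finset.subset_insert e _) h3
      have he'e : hex₂.choose = e :=
        enter_unique hloop hT' he'T' he'i he'r (Finset.mem_insert_self e _) hei hre
      rw [hPhip, hPsiq, he'e, Finset.erase_insert heTf, Finset.insert_erase hfT]
    · rw [hPhip]
      simp only
      rw [Finset.prod_insert heTf]
      rw [← Finset.mul_prod_erase T k hfT]
      ring
  have master2 : ∀ f : V × V, ∀ T' : Finset (V × V), f ∈ E → f.1 = i →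
      IsCompSpanningTreeTo E i T' →
      Ψ (f, T') ∈ (E ×ˢ E.powerset).filter
        (fun p => p.1.2 = i ∧ IsCompSpanningTreeTo E p.1.1 p.2) ∧
      Φ (Ψ (f, T')) = (f, T') := by
    intro f T' hfE hfi hT'
    have hli : f.2 ≠ i := fun h => hloop f hfE (hfi.trans h.symm)
    have hlu : uReach E f.2 i :=
      uReach_symm (hfi ▸ uReach_of_mem (show (f.1, f.2) ∈ E by simpa using hfE))
    have hex₂ : ∃ x ∈ T', x.2 = i ∧
        Relation.ReflTransGen (fun a b => (a,b) ∈ T') f.2 x.1 := exists_enter hT' hlu hli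
    have hPsiq : Ψ (f, T') = (hex₂.choose, insert f (T'.erase hex₂.choose)) := by
      simp only [hPsi]; rw [dif_pos hex₂]
    obtain ⟨heT', hei, her⟩ := hex₂.choose_spec
    set e := hex₂.choose with hedef
    have heE : e ∈ E := hT'.1 heT'
    have hT : IsCompSpanningTreeTo E e.1 (insert f (T'.erase e)) :=
      tree_rotate_from_root hloop hfE hfi hT' heT' hei her
    have hfT' : f ∉ T' := by
      intro h
      have h3 : f = (i, f.2) := Prod.ext hfi rfl
      rw [h3] at h
      exact root_no_out hT' h
    have hfT'e : f ∉ T'.erase e := fun h => hfT' (Finset.mem_of_mem_erase h)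
    refine ⟨?_, ?_⟩
    · rw [hPsiq, Finset.mem_filter, Finset.mem_product]
      exact ⟨⟨heE, Finset.mem_powerset.mpr hT.1⟩, hei, hT⟩
    · have hex₁ : ∃ x ∈ insert f (T'.erase e), x.1 = i :=
        ⟨f, Finset.mem_insert_self f _, hfi⟩
      have hPhip : Φ (e, insert f (T'.erase e)) =
          (hex₁.choose, insert e ((insert f (T'.erase e)).erase hex₁.choose)) := by
        simp only [hPhi]; rw [dif_pos hex₁]
      obtain ⟨hf'T, hf'i⟩ := hex₁.choose_spec
      have hf'f : hex₁.choose = f := by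
        rcases Finset.mem_insert.mp hf'T with h | h
        · exact h
        · have h2 : hex₁.choose ∈ T' := Finset.mem_of_mem_erase h
          have h3 : hex₁.choose = (i, hex₁.choose.2) := Prod.ext hf'i rfl
          rw [h3] at h2
          exact absurd h2 (root_no_out hT')
      rw [hPsiq, hPhip, hf'f, Finset.erase_insert hfT'e, Finset.insert_erase heT']
  apply Finset.sum_nbij' Φ Ψ
  · rintro ⟨e, T⟩ hp
    rw [Finset.mem_filter, Finset.mem_product] at hp
    exact (master1 e T hp.1.1 hp.2.1 hp.2.2).1
  · rintro ⟨f, T'⟩ hq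
    rw [Finset.mem_filter, Finset.mem_product] at hq
    exact (master2 f T' hq.1.1 hq.2.1 hq.2.2).1
  · rintro ⟨e, T⟩ hp
    rw [Finset.mem_filter, Finset.mem_product] at hp
    exact (master1 e T hp.1.1 hp.2.1 hp.2.2).2.1
  · rintro ⟨f, T'⟩ hq
    rw [Finset.mem_filter, Finset.mem_product] at hq
    exact (master2 f T' hq.1.1 hq.2.1 hq.2.2).2
  · rintro ⟨e, T⟩ hp
    rw [Finset.mem_filter, Finset.mem_product] at hp
    exact (master1 e T hp.1.1 hp.2.1 hp.2.2).2.2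

end MT2

section MT3
set_option linter.unusedSectionVars false
variable {V : Type*} [Fintype V] [DecidableEq V] {E : Finset (V × V)}

lemma prod_eq_of {α β : Type*} {p : α × β} {b : β} (h : p.2 = b) : p = (p.1, b) := by
  cases p; cases h; rfl

open scoped Classical in
lemma sum_filter_tree (k : V × V → ℝ) (cond : V × V → Prop) (root : V × V → V) :
    ∑ e ∈ E.filter (fun e => cond e), k e * treeConstM E k (root e)
    = ∑ p ∈ (E ×ˢ E.powerset).filter
        (fun p => cond p.1 ∧ IsCompSpanningTreeTo E (root p.1) p.2), k p.1 * ∏ x ∈ p.2, k x := by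
  rw [Finset.sum_filter, Finset.sum_filter, Finset.sum_product]
  apply Finset.sum_congr rfl
  intro e _
  by_cases hc : cond e
  · simp only [hc, if_true, true_and]
    rw [treeConstM, Finset.sum_filter, Finset.mul_sum]
    apply Finset.sum_congr rfl
    intro T _
    by_cases ht : IsCompSpanningTreeTo E (root e) T
    · simp [ht]
    · simp [ht]
  · simp [hc]

lemma sum_edges_into (i : V) (g : V × V → ℝ) :
    ∑ e ∈ E.filter (fun e => e.2 = i), g e
    = ∑ j ∈ Finset.univ.filter (fun j => (j, i) ∈ E), g (j, i) := by
  apply Finset.sum_nbij' (fun e => e.1) (fun j => (j, i))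
  · intro e he
    rw [Finset.mem_filter] at he
    rw [Finset.mem_filter]
    refine ⟨Finset.mem_univ _, ?_⟩
    have : e = (e.1, i) := prod_eq_of he.2
    rw [← this]; exact he.1
  · intro j hj
    rw [Finset.mem_filter] at hj
    rw [Finset.mem_filter]
    exact ⟨hj.2, rfl⟩
  · intro e he
    rw [Finset.mem_filter] at he
    exact (prod_eq_of he.2).symm
  · intro j _
    rfl
  · intro e he
    rw [Finset.mem_filter] at he
    rw [show e = (e.1, i) from prod_eq_of he.2]

lemma matrix_tree (hloop : NoSelfLoops E) (k : V × V → ℝ) (i : V) :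
    ∑ e ∈ E.filter (fun e => e.2 = i), k e * treeConstM E k e.1
    = (∑ e ∈ E.filter (fun e => e.1 = i), k e) * treeConstM E k i := by
  classical
  have h1 := sum_filter_tree (E := E) k (fun e => e.2 = i) (fun e => e.1)
  have h2 := sum_filter_tree (E := E) k (fun e => e.1 = i) (fun _ => i)
  rw [Finset.sum_mul]
  refine Eq.trans ?_ ((sum_trees_eq hloop k i).trans ?_)
  · convert h1 using 2 <;> congr
  · convert h2.symm using 2 <;> congr

lemma laplacian_mulVec_apply (hloop : NoSelfLoops E) (k : V × V → ℝ) (w : V → ℝ) (i : V) :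
    (LaplacianK E k).mulVec w i
    = (∑ e ∈ E.filter (fun e => e.2 = i), k e * w e.1)
      - (∑ e ∈ E.filter (fun e => e.1 = i), k e) * w i := by
  classical
  show ∑ j, LaplacianK E k i j * w j = _
  rw [← Finset.add_sum_erase Finset.univ _ (Finset.mem_univ i)]
  have hdiag : LaplacianK E k i i = -(∑ e ∈ E.filter (fun e => e.1 = i), k e) := by
    rw [LaplacianK, Matrix.of_apply, if_pos rfl]
  have hoff : ∀ j ∈ Finset.univ.erase i, LaplacianK E k i j * w j
      = if (j, i) ∈ E then k (j, i) * w j else 0 := by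
    intro j hj
    have hji : j ≠ i := (Finset.mem_erase.mp hj).1
    rw [LaplacianK, Matrix.of_apply, if_neg (fun h => hji h.symm)]
    by_cases h : (j, i) ∈ E
    · rw [if_pos h, if_pos h]
    · rw [if_neg h, if_neg h, zero_mul]
  rw [Finset.sum_congr rfl hoff, hdiag]
  have hext : ∑ j ∈ Finset.univ.erase i, (if (j, i) ∈ E then k (j, i) * w j else 0)
      = ∑ j : V, (if (j, i) ∈ E then k (j, i) * w j else 0) := by
    rw [← Finset.add_sum_erase Finset.univ _ (Finset.mem_univ i)]
    rw [if_neg (fun h => hloop (i,i) h rfl)]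
    ring
  rw [hext, ← Finset.sum_filter, ← sum_edges_into i (fun e => k e * w e.1)]
  ring

lemma laplacian_treeConst (hloop : NoSelfLoops E) (k : V × V → ℝ) :
    (LaplacianK E k).mulVec (treeConstM E k) = 0 := by
  funext i
  rw [laplacian_mulVec_apply hloop k _ i, matrix_tree hloop k i]
  simp

end MT3

section Final
set_option linter.unusedSectionVars false
variable {V : Type*} [Fintype V] [DecidableEq V] {E : Finset (V × V)} {k : V × V → ℝ}

lemma ratio_eq_of_kernel (hloop : NoSelfLoops E) (hk : ∀ e ∈ E, 0 < k e)
    (hwr : WeaklyReversible E) {ψ : V → ℝ} (hψ : ∀ v, 0 < ψ v)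
    (hker : (LaplacianK E k).mulVec ψ = 0) {a b : V} (hab : uReach E a b) :
    ψ a / treeConstM E k a = ψ b / treeConstM E k b := by
  classical
  have hK : ∀ v, 0 < treeConstM E k v := fun v => treeConstM_pos hk hwr v
  obtain ⟨v0, hv0S, hv0min⟩ := Finset.exists_min_image
    (Finset.univ.filter (fun v => uReach E v b)) (fun v => ψ v / treeConstM E k v)
    ⟨b, Finset.mem_filter.mpr ⟨Finset.mem_univ b, Relation.ReflTransGen.refl⟩⟩
  set c := ψ v0 / treeConstM E k v0 with hc
  set φ : V → ℝ := fun v => ψ v - c * treeConstM E k v with hφ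
  have hv0b : uReach E v0 b := (Finset.mem_filter.mp hv0S).2
  have hker' : (LaplacianK E k).mulVec φ = 0 := by
    have h1 : φ = ψ - c • treeConstM E k := by
      funext v; simp [hφ, smul_eq_mul]
    rw [h1, Matrix.mulVec_sub, Matrix.mulVec_smul, hker, laplacian_treeConst hloop k]
    simp
  have hnn : ∀ v, uReach E v b → 0 ≤ φ v := by
    intro v hv
    have hmin := hv0min v (Finset.mem_filter.mpr ⟨Finset.mem_univ v, hv⟩)
    have h2 := (le_div_iff₀ (hK v)).mp hmin
    simp only [hφ]
    linarith
  have hzero : ∀ v, uReach E v b → φ v = 0 → ∀ w, (w,v) ∈ E → φ w = 0 := by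
    intro v hv hv0 w hw
    have h1 : (LaplacianK E k).mulVec φ v = 0 := by rw [hker']; rfl
    rw [laplacian_mulVec_apply hloop k φ v, hv0, mul_zero, sub_zero] at h1
    have hterm : ∀ e ∈ E.filter (fun e => e.2 = v), 0 ≤ k e * φ e.1 := by
      intro e he
      rw [Finset.mem_filter] at he
      have h2 : uReach E e.1 v := by
        rw [← he.2]; exact uReach_of_mem (show (e.1, e.2) ∈ E by simpa using he.1)
      exact mul_nonneg (le_of_lt (hk e he.1)) (hnn e.1 (h2.trans hv))
    have hall := (Finset.sum_eq_zero_iff_of_nonneg hterm).mp h1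
    have hwv := hall (w,v) (Finset.mem_filter.mpr ⟨hw, rfl⟩)
    rcases mul_eq_zero.mp hwv with h | h
    · exact absurd h (ne_of_gt (hk (w,v) hw))
    · exact h
  have hchain : ∀ v w, dReach E v w → uReach E w b → φ w = 0 → φ v = 0 := by
    intro v w hd
    induction hd using Relation.ReflTransGen.head_induction_on with
    | refl => exact fun _ h => h
    | head hstep hrest ih =>
      intro hwb hw0
      have hmid := ih hwb hw0
      have hxb : uReach E _ b := (dReach_uReach hrest).trans hwb
      exact hzero _ hxb hmid _ hstep
  have hφv0 : φ v0 = 0 := by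
    simp only [hφ, hc]
    rw [div_mul_cancel₀ _ (hK v0).ne', sub_self]
  have haz : φ a = 0 := hchain a v0 (hwr a v0 (hab.trans (uReach_symm hv0b))) hv0b hφv0
  have hbz : φ b = 0 := hchain b v0 (hwr b v0 (uReach_symm hv0b)) hv0b hφv0
  simp only [hφ] at haz hbz
  have h1 : ψ a = c * treeConstM E k a := by linarith
  have h2 : ψ b = c * treeConstM E k b := by linarith
  rw [h1, h2, mul_div_assoc, mul_div_assoc, div_self (hK a).ne', div_self (hK b).ne']

lemma kernel_of_ratio (hloop : NoSelfLoops E) (ψ : V → ℝ)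
    (hKne : ∀ v, treeConstM E k v ≠ 0)
    (hratio : ∀ a b : V, uReach E a b →
      ψ a / treeConstM E k a = ψ b / treeConstM E k b) :
    (LaplacianK E k).mulVec ψ = 0 := by
  funext v
  show (LaplacianK E k).mulVec ψ v = (0 : ℝ)
  have hψw : ∀ w, uReach E w v → ψ w = (ψ v / treeConstM E k v) * treeConstM E k w := by
    intro w hw
    rw [← hratio w v hw, div_mul_cancel₀ (ψ w) (hKne w)]
  have hsum : ∑ e ∈ E.filter (fun e => e.2 = v), k e * ψ e.1
      = (ψ v / treeConstM E k v) * ∑ e ∈ E.filter (fun e => e.2 = v), k e * treeConstM E k e.1 := by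
    rw [Finset.mul_sum]
    apply Finset.sum_congr rfl
    intro e he
    rw [Finset.mem_filter] at he
    have h2 : uReach E e.1 v := by
      rw [← he.2]; exact uReach_of_mem (show (e.1, e.2) ∈ E by simpa using he.1)
    rw [hψw e.1 h2]; ring
  rw [laplacian_mulVec_apply hloop k ψ v, hsum, matrix_tree hloop k v,
    hψw v Relation.ReflTransGen.refl]
  have hKv := hKne v
  field_simp
  ring

end Final






/-- For a weakly reversible mass-action system `(G_k, y)` and an auxiliary digraph
`G_ℰ = (V,ℰ)`, a positive `x` is a complex-balanced equilibrium (`A_k x^Y = 0`) if and only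
if it satisfies the binomial equations
`x^{y(i')}/(K_k)_{i'} - x^{y(i)}/(K_k)_i = 0` for all `(i→i') ∈ ℰ`. -/
theorem complex_balanced_iff_binomials
    {V : Type*} [Fintype V] [DecidableEq V] {n : ℕ}
    (E : Finset (V × V)) (hloop : NoSelfLoops E)
    (k : V × V → ℝ) (hk : ∀ e ∈ E, 0 < k e)
    (y : V → Fin n → ℝ) (hyinj : Function.Injective y) (hynn : ∀ i j, 0 ≤ y i j)
    (hwr : WeaklyReversible E)
    (F : Finset (V × V)) (hF : IsAuxiliary E F)
    (x : Fin n → ℝ) (hx : ∀ j, 0 < x j) :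
    (LaplacianK E k).mulVec (monomial y x) = 0 ↔
      ∀ e ∈ F, monomial y x e.2 / treeConstM E k e.2 - monomial y x e.1 / treeConstM E k e.1 = 0 := by
  classical
  have hψ : ∀ v, 0 < monomial y x v :=
    fun v => Finset.prod_pos (fun j _ => Real.rpow_pos_of_pos (hx j) _)
  have hK : ∀ v, 0 < treeConstM E k v := fun v => treeConstM_pos hk hwr v
  constructor
  · intro hker e heF
    have hu : uReach E e.1 e.2 := (hF.2.2.2 e.1 e.2).mp (uReach_of_mem heF)
    rw [← ratio_eq_of_kernel hloop hk hwr hψ hker hu, sub_self]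
  · intro hbin
    apply kernel_of_ratio hloop _ (fun v => (hK v).ne')
    intro a b hab
    have hFr : uReach F a b := (hF.2.2.2 a b).mpr hab
    clear hab
    induction hFr with
    | refl => rfl
    | tail hrest hstep ih =>
      rcases hstep with h | h
      · have h2 := sub_eq_zero.mp (hbin _ h)
        dsimp only at h2 ⊢
        exact ih.trans h2.symm
      · have h2 := sub_eq_zero.mp (hbin _ h)
        dsimp only at h2 ⊢
        exact ih.trans h2
end
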